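/- Let a: ℝ → ℝ be C¹ with a, a' bounded, and let H(v|w) = H(v) − H(w) + p(w)(v − w) where H(v) = v^{1-γ}/(γ−1), p(v) = v^{-γ}, γ > 1. Suppose v, ṽ: ℝ → (0,∞) are C¹, with v − ṽ and derivatives decaying suitably at infinity and σ a constant. Then the identity ∫_ℝ a(ξ)[−p(v)σ v' + p'(ṽ)σ ṽ'(v − ṽ) + p(ṽ)σ v'] dξ = −σ ∫_ℝ a'(ξ) H(v|ṽ) dξ holds, where prime denotes ∂_ξ. -/

import Mathlib

open MeasureTheory

/-- Key integration-by-parts identity: with H(v) = v^(1-γ)/(γ-1),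
p(v) = v^(-γ), H(v|w) = H(v) − H(w) + p(w)(v − w), under suitable integrability and
decay hypotheses,
∫ a(ξ)[−p(v)σv' + p'(vv)σvv'(v−vv) + p(vv)σv'] dξ = −σ ∫ a'(ξ) H(v|vv) dξ. -/
theorem stmt_16 (γ σ : ℝ) (hγ : 1 < γ)
    (a v vv : ℝ → ℝ)
    (ha : ContDiff ℝ 1 a) (habd : ∃ M : ℝ, ∀ ξ, |a ξ| + |deriv a ξ| ≤ M)
    (hv : ContDiff ℝ 1 v) (hvv : ContDiff ℝ 1 vv)
    (hvpos : ∃ m : ℝ, 0 < m ∧ ∀ ξ, m ≤ v ξ ∧ m ≤ vv ξ)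
    (hvbd : ∃ M : ℝ, ∀ ξ, v ξ ≤ M ∧ vv ξ ≤ M)
    (hint1 : Integrable (fun ξ =>
      a ξ * (-(v ξ) ^ (-γ) * σ * deriv v ξ
        + (-γ * (vv ξ) ^ (-γ - 1)) * σ * deriv vv ξ * (v ξ - vv ξ)
        + (vv ξ) ^ (-γ) * σ * deriv v ξ)))
    (hint2 : Integrable (fun ξ =>
      deriv a ξ * ((v ξ) ^ (1 - γ) / (γ - 1) - (vv ξ) ^ (1 - γ) / (γ - 1)
        + (vv ξ) ^ (-γ) * (v ξ - vv ξ))))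
    (hbdryT : Filter.Tendsto (fun ξ =>
      a ξ * ((v ξ) ^ (1 - γ) / (γ - 1) - (vv ξ) ^ (1 - γ) / (γ - 1)
        + (vv ξ) ^ (-γ) * (v ξ - vv ξ))) Filter.atTop (nhds 0))
    (hbdryB : Filter.Tendsto (fun ξ =>
      a ξ * ((v ξ) ^ (1 - γ) / (γ - 1) - (vv ξ) ^ (1 - γ) / (γ - 1)
        + (vv ξ) ^ (-γ) * (v ξ - vv ξ))) Filter.atBot (nhds 0)) :
    (∫ ξ : ℝ, a ξ * (-(v ξ) ^ (-γ) * σ * deriv v ξ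
        + (-γ * (vv ξ) ^ (-γ - 1)) * σ * deriv vv ξ * (v ξ - vv ξ)
        + (vv ξ) ^ (-γ) * σ * deriv v ξ)) =
      -σ * ∫ ξ : ℝ, deriv a ξ * ((v ξ) ^ (1 - γ) / (γ - 1) - (vv ξ) ^ (1 - γ) / (γ - 1)
        + (vv ξ) ^ (-γ) * (v ξ - vv ξ)) := by
  by_cases hσ : σ = 0
  · simp [hσ]
  obtain ⟨m, hm, hmle⟩ := hvpos
  set F : ℝ → ℝ := fun ξ => (v ξ) ^ (1 - γ) / (γ - 1) - (vv ξ) ^ (1 - γ) / (γ - 1)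
        + (vv ξ) ^ (-γ) * (v ξ - vv ξ) with hF
  set G : ℝ → ℝ := fun ξ => -(v ξ) ^ (-γ) * deriv v ξ
        + (-γ * (vv ξ) ^ (-γ - 1)) * deriv vv ξ * (v ξ - vv ξ)
        + (vv ξ) ^ (-γ) * deriv v ξ with hG
  have hvne : ∀ ξ, v ξ ≠ 0 := fun ξ => ne_of_gt (lt_of_lt_of_le hm (hmle ξ).1)
  have hvvne : ∀ ξ, vv ξ ≠ 0 := fun ξ => ne_of_gt (lt_of_lt_of_le hm (hmle ξ).2)
  have hvd : ∀ ξ, HasDerivAt v (deriv v ξ) ξ :=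
    fun ξ => (hv.differentiable one_ne_zero ξ).hasDerivAt
  have hvvd : ∀ ξ, HasDerivAt vv (deriv vv ξ) ξ :=
    fun ξ => (hvv.differentiable one_ne_zero ξ).hasDerivAt
  have had : ∀ ξ, HasDerivAt a (deriv a ξ) ξ :=
    fun ξ => (ha.differentiable one_ne_zero ξ).hasDerivAt
  have hFd : ∀ ξ, HasDerivAt F (G ξ) ξ := by
    intro ξ
    have h1 : HasDerivAt (fun ξ => (v ξ) ^ (1 - γ))
        ((1 - γ) * (v ξ) ^ (-γ) * deriv v ξ) ξ := by
      have := (Real.hasDerivAt_rpow_const (p := 1 - γ) (Or.inl (hvne ξ))).comp ξ (hvd ξ)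
      rw [show 1 - γ - 1 = -γ by ring] at this
      exact this
    have h2 : HasDerivAt (fun ξ => (vv ξ) ^ (1 - γ))
        ((1 - γ) * (vv ξ) ^ (-γ) * deriv vv ξ) ξ := by
      have := (Real.hasDerivAt_rpow_const (p := 1 - γ) (Or.inl (hvvne ξ))).comp ξ (hvvd ξ)
      rw [show 1 - γ - 1 = -γ by ring] at this
      exact this
    have h3 : HasDerivAt (fun ξ => (vv ξ) ^ (-γ))
        ((-γ) * (vv ξ) ^ (-γ - 1) * deriv vv ξ) ξ := by
      have := (Real.hasDerivAt_rpow_const (p := -γ) (Or.inl (hvvne ξ))).comp ξ (hvvd ξ)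
      exact this
    have hd : HasDerivAt F
        (((1 - γ) * (v ξ) ^ (-γ) * deriv v ξ) / (γ - 1)
          - ((1 - γ) * (vv ξ) ^ (-γ) * deriv vv ξ) / (γ - 1)
          + (((-γ) * (vv ξ) ^ (-γ - 1) * deriv vv ξ) * (v ξ - vv ξ)
            + (vv ξ) ^ (-γ) * (deriv v ξ - deriv vv ξ))) ξ :=
      ((h1.div_const _).sub (h2.div_const _)).add (h3.mul ((hvd ξ).sub (hvvd ξ)))
    convert hd using 1
    have hγne : γ - 1 ≠ 0 := sub_ne_zero.mpr (ne_of_gt hγ)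
    field_simp [hG]
    ring
  have key := integral_mul_deriv_eq_deriv_mul (u := a) (v := F) (u' := deriv a) (v' := G)
      (a' := (0 : ℝ)) (b' := (0 : ℝ)) (fun x _ => had x) (fun x _ => hFd x) ?_ ?_ ?_ ?_
  · have hLHS : (fun ξ : ℝ => a ξ * (-(v ξ) ^ (-γ) * σ * deriv v ξ
        + (-γ * (vv ξ) ^ (-γ - 1)) * σ * deriv vv ξ * (v ξ - vv ξ)
        + (vv ξ) ^ (-γ) * σ * deriv v ξ)) = fun ξ => σ * (a ξ * G ξ) := by
      funext ξ; simp only [hG]; ring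
    rw [hLHS, integral_const_mul, key]
    ring
  · -- Integrable (a * G)
    · have : (a * G) = fun ξ => σ⁻¹ * (a ξ * (-(v ξ) ^ (-γ) * σ * deriv v ξ
          + (-γ * (vv ξ) ^ (-γ - 1)) * σ * deriv vv ξ * (v ξ - vv ξ)
          + (vv ξ) ^ (-γ) * σ * deriv v ξ)) := by
        funext ξ; simp only [Pi.mul_apply, hG]; field_simp
      rw [this]
      exact hint1.const_mul _
  · exact hint2
  · exact hbdryB
  · exact hbdryT
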